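/- Let H be a real Hilbert space with a Hilbert basis (b i)_{i∈ι}, let L : H → H be a continuous linear operator, and let B, λ_F ≥ 0. Assume the family i ↦ ‖(L† ∘ L)(b i)‖² is summable with ∑' i, ‖(L† ∘ L)(b i)‖² ≤ λ_F² (i.e., ‖L† L‖_{S₂} ≤ λ_F). Then for all x_h, x_i, x_j ∈ H with ‖x_h‖ ≤ B, ‖x_i‖ ≤ B, and ‖x_j‖ ≤ B, one has ‖L x_h − L x_i‖² − ‖L x_h − L x_j‖² ≤ 6 B² λ_F. -/
import Mathlib
open scoped RealInnerProductSpace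


/-- If `‖L† L‖_{S₂} ≤ λ_F` then the difference of squared distances of a triplet of points of
norm at most `B` is bounded by `6 B² λ_F`. -/
theorem stmt_4 {ι H : Type*} [NormedAddCommGroup H] [InnerProductSpace ℝ H] [CompleteSpace H]
    (b : HilbertBasis ι ℝ H) (L : H →L[ℝ] H) (B lF : ℝ) (hB : 0 ≤ B) (hlF : 0 ≤ lF)
    (hsum : Summable fun i => ‖((ContinuousLinearMap.adjoint L).comp L) (b i)‖ ^ 2)
    (hHS : ∑' i, ‖((ContinuousLinearMap.adjoint L).comp L) (b i)‖ ^ 2 ≤ lF ^ 2)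
    (xh xi xj : H) (hxh : ‖xh‖ ≤ B) (hxi : ‖xi‖ ≤ B) (hxj : ‖xj‖ ≤ B) :
    ‖L xh - L xi‖ ^ 2 - ‖L xh - L xj‖ ^ 2 ≤ 6 * B ^ 2 * lF := by
  set T := (ContinuousLinearMap.adjoint L).comp L with hT
  -- key: ∀ x, ‖L x‖² ≤ lF * ‖x‖²
  have key : ∀ x : H, ‖L x‖ ^ 2 ≤ lF * ‖x‖ ^ 2 := by
    intro x
    have hTx : ‖T x‖ ^ 2 ≤ ‖x‖ ^ 2 * lF ^ 2 := by
      have h1 : (‖T x‖ : ℝ) ^ 2 = ∑' i, ⟪T x, b i⟫ * ⟪b i, T x⟫ := by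
        rw [b.tsum_inner_mul_inner (T x) (T x), real_inner_self_eq_norm_sq]
      have h2 : ∀ i, ⟪T x, b i⟫ * ⟪b i, T x⟫ ≤ ‖x‖ ^ 2 * ‖T (b i)‖ ^ 2 := by
        intro i
        have hsym : ⟪T x, b i⟫ = ⟪x, T (b i)⟫ := by
          simp only [hT, ContinuousLinearMap.comp_apply,
            ContinuousLinearMap.adjoint_inner_left, ContinuousLinearMap.adjoint_inner_right]
        have hsym2 : ⟪b i, T x⟫ = ⟪x, T (b i)⟫ := (real_inner_comm _ _).trans hsym
        rw [hsym, hsym2, ← sq]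
        calc ⟪x, T (b i)⟫ ^ 2 ≤ (‖x‖ * ‖T (b i)‖) ^ 2 := by
              have := abs_real_inner_le_norm x (T (b i))
              nlinarith [abs_nonneg ⟪x, T (b i)⟫, sq_abs ⟪x, T (b i)⟫]
          _ = ‖x‖ ^ 2 * ‖T (b i)‖ ^ 2 := by ring
      have hs1 : Summable fun i => ⟪T x, b i⟫ * ⟪b i, T x⟫ :=
        b.summable_inner_mul_inner (T x) (T x)
      have hs2 : Summable fun i => ‖x‖ ^ 2 * ‖T (b i)‖ ^ 2 := hsum.mul_left _
      calc ‖T x‖ ^ 2 = ∑' i, ⟪T x, b i⟫ * ⟪b i, T x⟫ := h1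
        _ ≤ ∑' i, ‖x‖ ^ 2 * ‖T (b i)‖ ^ 2 := Summable.tsum_le_tsum h2 hs1 hs2
        _ = ‖x‖ ^ 2 * ∑' i, ‖T (b i)‖ ^ 2 := tsum_mul_left
        _ ≤ ‖x‖ ^ 2 * lF ^ 2 := by
            exact mul_le_mul_of_nonneg_left hHS (sq_nonneg _)
    have h4 : (‖L x‖ ^ 2) ^ 2 ≤ (lF * ‖x‖ ^ 2) ^ 2 := by
      have hLx : ‖L x‖ ^ 2 = ⟪T x, x⟫ := by
        simp only [hT, ContinuousLinearMap.comp_apply, ContinuousLinearMap.adjoint_inner_left]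
        rw [real_inner_self_eq_norm_sq]
      have hcs : ⟪T x, x⟫ ≤ ‖T x‖ * ‖x‖ := real_inner_le_norm _ _
      have hnn : (0:ℝ) ≤ ‖L x‖ ^ 2 := sq_nonneg _
      nlinarith [norm_nonneg (T x), norm_nonneg x, sq_nonneg (‖T x‖ - ‖x‖ * lF)]
    have h5 := Real.sqrt_le_sqrt h4
    rwa [Real.sqrt_sq (sq_nonneg _), Real.sqrt_sq (by positivity)] at h5
  have h1 : ‖L xh - L xi‖ ^ 2 ≤ 4 * B ^ 2 * lF := by
    have : L xh - L xi = L (xh - xi) := (map_sub L xh xi).symm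
    rw [this]
    calc ‖L (xh - xi)‖ ^ 2 ≤ lF * ‖xh - xi‖ ^ 2 := key _
      _ ≤ lF * (2 * B) ^ 2 := by
          have := (norm_sub_le xh xi).trans (add_le_add hxh hxi)
          have h2 : ‖xh - xi‖ ^ 2 ≤ (2 * B) ^ 2 := by nlinarith [norm_nonneg (xh - xi)]
          exact mul_le_mul_of_nonneg_left h2 hlF
      _ = 4 * B ^ 2 * lF := by ring
  nlinarith [sq_nonneg ‖L xh - L xj‖, sq_nonneg B, mul_nonneg (mul_nonneg (by norm_num : (0:ℝ) ≤ 2) (sq_nonneg B)) hlF]
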